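/- For any two distributions P, Q with respective true labeling functions f_P, f_Q, and any hypothesis h ∈ H, the error of h on P is bounded by its error on Q plus half the HΔH-divergence plus the optimal combined error: ε_P(h, f_P) ≤ ε_Q(h, f_Q) + (1/2) d_{HΔH}(P, Q) + λ, where λ = inf_{h' ∈ H} (ε_P(h', f_P) + ε_Q(h', f_Q)). -/
import Mathlib


open MeasureTheory

/-- Disagreement error of two hypotheses/labelings under a distribution D. -/
noncomputable def errD {X : Type*} [MeasurableSpace X]
    (D : Measure X) (h g : X → Bool) : ℝ :=
  (D {x | h x ≠ g x}).toReal

/-- The HΔH-divergence between probability measures P and Q over a hypothesis class H. -/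
noncomputable def dHDH {X : Type*} [MeasurableSpace X]
    (H : Set (X → Bool)) (P Q : Measure X) : ℝ :=
  2 * sSup {r : ℝ | ∃ h ∈ H, ∃ h' ∈ H, r = |errD P h h' - errD Q h h'|}

lemma errD_nonneg {X : Type*} [MeasurableSpace X] (D : Measure X) (h g : X → Bool) :
    0 ≤ errD D h g := ENNReal.toReal_nonneg

lemma errD_le_one {X : Type*} [MeasurableSpace X] (D : Measure X) [IsProbabilityMeasure D]
    (h g : X → Bool) : errD D h g ≤ 1 := by
  have := prob_le_one (μ := D) (s := {x | h x ≠ g x})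
  simpa [errD] using ENNReal.toReal_le_of_le_ofReal zero_le_one (by simpa using this)

lemma errD_symm {X : Type*} [MeasurableSpace X] (D : Measure X) (h g : X → Bool) :
    errD D h g = errD D g h := by
  unfold errD
  congr 1
  congr 1
  ext x
  simp [ne_comm]

lemma errD_triangle {X : Type*} [MeasurableSpace X] (D : Measure X) [IsFiniteMeasure D]
    (h k g : X → Bool) : errD D h g ≤ errD D h k + errD D k g := by
  have hsub : {x | h x ≠ g x} ⊆ {x | h x ≠ k x} ∪ {x | k x ≠ g x} := by
    intro x hx
    by_cases hc : h x = k x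
    · right; simp only [Set.mem_setOf_eq] at *; rw [← hc]; exact hx
    · left; exact hc
  have h1 : D {x | h x ≠ g x} ≤ D {x | h x ≠ k x} + D {x | k x ≠ g x} :=
    le_trans (measure_mono hsub) (measure_union_le _ _)
  have hne : D {x | h x ≠ k x} + D {x | k x ≠ g x} ≠ ⊤ :=
    ENNReal.add_ne_top.2 ⟨measure_ne_top _ _, measure_ne_top _ _⟩
  have := ENNReal.toReal_le_toReal (measure_ne_top _ _) hne |>.2 h1
  simpa [errD, ENNReal.toReal_add (measure_ne_top D _) (measure_ne_top D _)] using this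

/-- Domain adaptation bound: ε_P(h, f_P) ≤ ε_Q(h, f_Q) + (1/2) d_{HΔH}(P,Q) + λ,
where λ = inf_{h'∈H} (ε_P(h', f_P) + ε_Q(h', f_Q)), attained by some h* ∈ H. -/
theorem domain_adaptation_bound {X : Type*} [MeasurableSpace X]
    (H : Set (X → Bool)) (P Q : Measure X)
    [IsProbabilityMeasure P] [IsProbabilityMeasure Q]
    (fP fQ : X → Bool) (hmP : Measurable fP) (hmQ : Measurable fQ)
    (hmeas : ∀ h ∈ H, Measurable h)
    (h : X → Bool) (hH : h ∈ H)
    (lam : ℝ) (hstar : X → Bool) (hstarH : hstar ∈ H)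
    (hlam_eq : lam = errD P hstar fP + errD Q hstar fQ)
    (hlam_min : ∀ h' ∈ H, lam ≤ errD P h' fP + errD Q h' fQ) :
    errD P h fP ≤ errD Q h fQ + (1 / 2) * dHDH H P Q + lam := by
  set S : Set ℝ := {r : ℝ | ∃ h ∈ H, ∃ h' ∈ H, r = |errD P h h' - errD Q h h'|}
  have hbdd : BddAbove S := by
    refine ⟨2, ?_⟩
    rintro r ⟨a, _, b, _, rfl⟩
    have h1 := errD_le_one P a b
    have h2 := errD_le_one Q a b
    have h3 := errD_nonneg P a b
    have h4 := errD_nonneg Q a b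
    rw [abs_le]; constructor <;> linarith
  have hmem : |errD P h hstar - errD Q h hstar| ∈ S := ⟨h, hH, hstar, hstarH, rfl⟩
  have hsup : |errD P h hstar - errD Q h hstar| ≤ sSup S := le_csSup hbdd hmem
  have key : errD P h hstar - errD Q h hstar ≤ sSup S :=
    le_trans (le_abs_self _) hsup
  have t1 : errD P h fP ≤ errD P h hstar + errD P hstar fP := errD_triangle P h hstar fP
  have t2 : errD Q h hstar ≤ errD Q h fQ + errD Q fQ hstar := errD_triangle Q h fQ hstar
  have e1 : errD Q fQ hstar = errD Q hstar fQ := errD_symm Q fQ hstar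
  have hd : dHDH H P Q = 2 * sSup S := rfl
  rw [hd, hlam_eq]
  linarith
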